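/- In a linear Fisher market, let x* be a maximizer of the Eisenberg–Gale program and define β_i = B_i / (v_i · x*_i) and p_j = max_i β_i v_{ij}. Then: (a) x*_{ij} > 0 implies β_i v_{ij} = p_j (each buyer has a single utility price, i.e., equal bang-per-buck across all items assigned to them); (b) p · x*_i = B_i for every buyer i, so that ∑_j s_j p_j = ∑_i B_i; (c) the market clears: ∑_i x*_{ij} = s_j for every item j; (d) for every y ∈ ℝ_{≥0}^m with p · y ≤ B_i one has v_i · y ≤ v_i · x*_i, i.e., the CEEI allocation is a market equilibrium and has no regret. -/

import Mathlib

/-- Extended-real-valued logarithm: `elog t = log t` for `t > 0` and `⊥` (i.e. `-∞`)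
for `t ≤ 0`. -/
noncomputable def elog (t : ℝ) : EReal :=
  if t ≤ 0 then ⊥ else ((Real.log t : ℝ) : EReal)

/-- An allocation is feasible if it is nonnegative and allocates at most the supply
`s j` of each item `j`. -/
def Feasible {ι : Type*} [Fintype ι] {m : ℕ} (s : Fin m → ℝ)
    (x : ι → Fin m → ℝ) : Prop :=
  (∀ i j, 0 ≤ x i j) ∧ ∀ j, ∑ i, x i j ≤ s j

/-- The Eisenberg–Gale objective `∑ i, B i * log (v i · x i)` (valued in `EReal`). -/
noncomputable def EGobj {ι : Type*} [Fintype ι] {m : ℕ} (v : ι → Fin m → ℝ)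
    (B : ι → ℝ) (x : ι → Fin m → ℝ) : EReal :=
  ∑ i, (B i : EReal) * elog (∑ j, v i j * x i j)

/-- `x` is a maximizer of the Eisenberg–Gale program (a CEEI allocation). -/
def EGMax {ι : Type*} [Fintype ι] {m : ℕ} (s : Fin m → ℝ) (v : ι → Fin m → ℝ)
    (B : ι → ℝ) (x : ι → Fin m → ℝ) : Prop :=
  Feasible s x ∧ ∀ y, Feasible s y → EGobj v B y ≤ EGobj v B x

lemma EReal.coe_sum' {ι : Type*} (s : Finset ι) (f : ι → ℝ) :
    ((∑ i ∈ s, f i : ℝ) : EReal) = ∑ i ∈ s, (f i : EReal) := by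
  induction s using Finset.cons_induction with
  | empty => simp
  | cons a s ha ih => simp [Finset.sum_cons, ih, EReal.coe_add]

lemma elog_of_pos {t : ℝ} (ht : 0 < t) : elog t = ((Real.log t : ℝ) : EReal) := by
  simp [elog, not_le.mpr ht]

lemma EGobj_eq_coe {ι : Type*} [Fintype ι] {m : ℕ} (v : ι → Fin m → ℝ) (B : ι → ℝ)
    (z : ι → Fin m → ℝ) (hz : ∀ i, 0 < ∑ j, v i j * z i j) :
    EGobj v B z = ((∑ i, B i * Real.log (∑ j, v i j * z i j) : ℝ) : EReal) := by
  rw [EGobj, EReal.coe_sum']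
  exact Finset.sum_congr rfl fun i _ => by rw [elog_of_pos (hz i), ← EReal.coe_mul]

/-- **Properties of the CEEI/Eisenberg–Gale solution.**  In a linear Fisher market,
let `x` be a maximizer of the Eisenberg–Gale program and define the utility prices
`β i = B i / (v i · x i)` and item prices `p j = max_i β i * v i j`.  Then:
(a) `x i j > 0` implies `β i * v i j = p j` (equal bang-per-buck across all items
assigned to a buyer); (b) `p · x i = B i` for every buyer `i`, so that
`∑ j, s j * p j = ∑ i, B i`; (c) the market clears: `∑ i, x i j = s j` for every
item `j`; (d) every buyer demands their bundle: for every `y ∈ ℝ_{≥0}^m` with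
`p · y ≤ B i` one has `v i · y ≤ v i · x i`, i.e. the CEEI allocation is a market
equilibrium and has no regret. -/
theorem ceei_is_market_equilibrium {n m : ℕ} (hm : 0 < m)
    (v : Fin n → Fin m → ℝ) (B : Fin n → ℝ) (s : Fin m → ℝ)
    (hv : ∀ i j, 0 < v i j) (hB : ∀ i, 0 < B i) (hs : ∀ j, 0 < s j)
    (x : Fin n → Fin m → ℝ) (hx : EGMax s v B x)
    (p : Fin m → ℝ)
    (hp : ∀ j, IsGreatest
      (Set.range fun i => (B i / (∑ j', v i j' * x i j')) * v i j) (p j)) :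
    (∀ i j, 0 < x i j → (B i / (∑ j', v i j' * x i j')) * v i j = p j) ∧
    (∀ i, ∑ j, p j * x i j = B i) ∧
    (∑ j, s j * p j = ∑ i, B i) ∧
    (∀ j, ∑ i, x i j = s j) ∧
    (∀ i, ∀ y : Fin m → ℝ, (∀ j, 0 ≤ y j) → (∑ j, p j * y j) ≤ B i →
      (∑ j, v i j * y j) ≤ ∑ j, v i j * x i j) := by
  classical
  obtain ⟨⟨hxnn, hxle⟩, hmax⟩ := hx
  set u : Fin n → ℝ := fun i => ∑ j', v i j' * x i j' with hudef
  have hu : ∀ i, (∑ j, v i j * x i j) = u i := fun i => rfl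
  -- `Fin n` is nonempty
  obtain ⟨iW, -⟩ := (hp ⟨0, hm⟩).1
  haveI : Nonempty (Fin n) := ⟨iW⟩
  have hn : 0 < (n : ℝ) := by exact_mod_cast iW.pos
  -- a feasible allocation with positive utilities
  have hn' : (n : ℝ) ≠ 0 := ne_of_gt hn
  have hy0f : Feasible s (fun (_ : Fin n) j => s j / n) := by
    refine ⟨fun i j => div_nonneg (hs j).le hn.le, fun j => ?_⟩
    rw [Finset.sum_const, Finset.card_univ, Fintype.card_fin, nsmul_eq_mul]
    exact le_of_eq (by field_simp)
  have hy0u : ∀ i, 0 < ∑ j, v i j * (s j / n) := fun i =>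
    Finset.sum_pos (fun j _ => by have := hv i j; have := hs j; positivity)
      ⟨⟨0, hm⟩, Finset.mem_univ _⟩
  have hbot : EGobj v B x ≠ ⊥ := by
    have h1 := hmax _ hy0f
    rw [EGobj_eq_coe v B _ hy0u] at h1
    intro h; rw [h, le_bot_iff] at h1
    exact EReal.coe_ne_bot _ h1
  -- positive utilities at the optimum
  have hupos : ∀ i, 0 < u i := by
    intro i
    by_contra h
    push_neg at h
    apply hbot
    rw [EGobj, ← Finset.add_sum_erase _ _ (Finset.mem_univ i)]
    have he : elog (∑ j, v i j * x i j) = ⊥ := by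
      rw [hu i]; simp [elog, h]
    rw [he, EReal.mul_bot_of_pos (by exact_mod_cast hB i), EReal.bot_add]
  have hune : ∀ i, u i ≠ 0 := fun i => ne_of_gt (hupos i)
  -- the real-valued objective
  set F : (Fin n → Fin m → ℝ) → ℝ :=
    fun z => ∑ i, B i * Real.log (∑ j, v i j * z i j) with hFdef
  have hFle : ∀ y, Feasible s y → (∀ i, 0 < ∑ j, v i j * y i j) → F y ≤ F x := by
    intro y hyf hyu
    have h1 := hmax y hyf
    rw [EGobj_eq_coe v B y hyu, EGobj_eq_coe v B x (fun i => (hu i) ▸ hupos i)] at h1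
    exact_mod_cast h1
  clear_value u F
  -- (c) market clearing
  have hclear : ∀ j, ∑ i, x i j = s j := by
    intro j0
    by_contra hne
    have hlt : ∑ i, x i j0 < s j0 := lt_of_le_of_ne (hxle j0) hne
    set ε := s j0 - ∑ i, x i j0 with hεdef
    have hεpos : 0 < ε := by dsimp [ε]; linarith
    set y : Fin n → Fin m → ℝ :=
      fun i j => x i j + (if i = iW ∧ j = j0 then ε else 0) with hydef
    have hyu : ∀ i, ∑ j, v i j * y i j
        = u i + (if i = iW then v i j0 * ε else 0) := by
      intro i
      have e : ∀ j, v i j * y i j = v i j * x i j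
          + (if j = j0 then (if i = iW then v i j0 * ε else 0) else 0) := by
        intro j
        by_cases hj : j = j0 <;> by_cases hi : i = iW <;>
          simp [hydef, hj, hi, mul_add]
      rw [Finset.sum_congr rfl fun j _ => e j, Finset.sum_add_distrib, hu i,
        Finset.sum_ite_eq' Finset.univ j0]
      simp
    have hyf : Feasible s y := by
      constructor
      · intro i j
        dsimp [y]
        split
        · have := hxnn i j; linarith
        · simp [hxnn i j]
      · intro j
        dsimp [y]
        rw [Finset.sum_add_distrib]
        have : (∑ i, if i = iW ∧ j = j0 then ε else 0)
            = if j = j0 then ε else 0 := by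
          by_cases hj : j = j0
          · subst hj
            simp only [and_true]
            rw [Finset.sum_ite_eq' Finset.univ iW (fun _ => ε)]
            simp
          · simp [hj]
        rw [this]
        by_cases hj : j = j0
        · subst hj; rw [if_pos rfl]; dsimp [ε]; linarith
        · rw [if_neg hj]; simpa using hxle j
    have hyupos : ∀ i, 0 < ∑ j, v i j * y i j := by
      intro i
      rw [hyu i]
      have h1 := hupos i
      split
      · have := hv i j0; nlinarith
      · simpa using h1
    have hFlt : F x < F y := by
      simp only [hFdef]
      apply Finset.sum_lt_sum
      · intro i _
        rw [hyu i, hu i]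
        have hbi := (hB i).le
        apply mul_le_mul_of_nonneg_left _ hbi
        apply Real.log_le_log (hupos i)
        split
        · have := hv i j0; nlinarith
        · simp
      · refine ⟨iW, Finset.mem_univ _, ?_⟩
        rw [hyu iW, hu iW, if_pos rfl]
        apply mul_lt_mul_of_pos_left _ (hB iW)
        apply Real.log_lt_log (hupos iW)
        have := hv iW j0; nlinarith [hupos iW]
    exact absurd (hFle y hyf hyupos) (not_le.mpr hFlt)
  -- the swap lemma: equal bang-per-buck
  have hswap : ∀ i0 i1 j0, 0 < x i0 j0 →
      (B i1 / u i1) * v i1 j0 ≤ (B i0 / u i0) * v i0 j0 := by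
    intro i0 i1 j0 hx0
    by_cases hii : i1 = i0
    · subst hii; exact le_refl _
    by_contra hlt
    push_neg at hlt
    set a := v i0 j0 with hadef
    set b := v i1 j0 with hbdef
    have ha : 0 < a := hv i0 j0
    have hb : 0 < b := hv i1 j0
    have hu0 : 0 < u i0 := hupos i0
    have hu1 : 0 < u i1 := hupos i1
    have hB0 : 0 < B i0 := hB i0
    have hB1 : 0 < B i1 := hB i1
    rw [div_mul_eq_mul_div, div_mul_eq_mul_div, div_lt_div_iff₀ hu0 hu1] at hlt
    -- hlt : B i0 * a * u i1 < B i1 * b * u i0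
    set c := B i1 * b * u i0 - B i0 * a * u i1 with hcdef
    have hc : 0 < c := by dsimp [c]; linarith
    set D := a * b * (B i0 + B i1) with hDdef
    have hD : 0 < D := by positivity
    set t := min (x i0 j0) (min (u i0 / (2 * a)) (c / (D + 1))) with htdef
    have ht0 : 0 < t := by
      apply lt_min hx0
      apply lt_min (by positivity) (by positivity)
    have ht1 : t ≤ x i0 j0 := min_le_left _ _
    have ht2 : a * t ≤ u i0 / 2 := by
      have h : t ≤ u i0 / (2 * a) := (min_le_left _ _).trans' (min_le_right _ _)
      calc a * t ≤ a * (u i0 / (2 * a)) :=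
            mul_le_mul_of_nonneg_left h ha.le
        _ = u i0 / 2 := by field_simp
    have ht3 : D * t < c := by
      have h : t ≤ c / (D + 1) := (min_le_right _ _).trans' (min_le_right _ _)
      have h2 : t * (D + 1) ≤ c := by
        rw [← le_div_iff₀ (by positivity)]; exact h
      nlinarith
    have hu0t : 0 < u i0 - a * t := by linarith
    have ht3' : a * b * (B i0 + B i1) * t < B i1 * b * u i0 - B i0 * a * u i1 := by
      rw [hDdef, hcdef] at ht3; exact ht3
    clear_value t c D
    -- the perturbed allocation
    set y : Fin n → Fin m → ℝ := fun i j =>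
      x i j + (if i = i1 ∧ j = j0 then t else 0)
        - (if i = i0 ∧ j = j0 then t else 0) with hydef
    have hyu : ∀ i, ∑ j, v i j * y i j
        = u i + (if i = i1 then b * t else 0) - (if i = i0 then a * t else 0) := by
      intro i
      have e : ∀ j, v i j * y i j = v i j * x i j
          + (if j = j0 then (if i = i1 then b * t else 0) else 0)
          - (if j = j0 then (if i = i0 then a * t else 0) else 0) := by
        intro j
        by_cases h1 : i = i1 <;> by_cases h0 : i = i0
        · exact absurd (h1.symm.trans h0) hii
        all_goals by_cases hj : j = j0 <;>
          simp [hydef, hj, h1, h0, hadef, hbdef, hii, mul_add, mul_sub,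
            show ¬ i0 = i1 from fun h => hii h.symm] <;> ring
      rw [Finset.sum_congr rfl fun j _ => e j, Finset.sum_sub_distrib,
        Finset.sum_add_distrib, hu i, Finset.sum_ite_eq' Finset.univ j0,
        Finset.sum_ite_eq' Finset.univ j0]
      simp
    have hyf : Feasible s y := by
      constructor
      · intro i j
        simp only [hydef]
        by_cases hi0 : i = i0 ∧ j = j0
        · rw [if_neg (by rintro ⟨h1, -⟩; exact hii (h1.symm.trans hi0.1)), if_pos hi0]
          rw [hi0.1, hi0.2]
          linarith
        · rw [if_neg hi0]
          have := hxnn i j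
          split <;> linarith
      · intro j
        simp only [hydef]
        rw [Finset.sum_sub_distrib, Finset.sum_add_distrib]
        have e1 : (∑ i, if i = i1 ∧ j = j0 then t else 0)
            = if j = j0 then t else 0 := by
          by_cases hj : j = j0
          · simp only [hj, and_true]
            rw [Finset.sum_ite_eq' Finset.univ i1 (fun _ => t)]; simp
          · simp [hj]
        have e2 : (∑ i, if i = i0 ∧ j = j0 then t else 0)
            = if j = j0 then t else 0 := by
          by_cases hj : j = j0
          · simp only [hj, and_true]
            rw [Finset.sum_ite_eq' Finset.univ i0 (fun _ => t)]; simp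
          · simp [hj]
        rw [e1, e2]
        simpa using hxle j
    have hyupos : ∀ i, 0 < ∑ j, v i j * y i j := by
      intro i
      rw [hyu i]
      have h1 := hupos i
      by_cases hi1 : i = i1
      · rw [if_pos hi1, if_neg (by rw [hi1]; exact hii)]
        nlinarith
      · rw [if_neg hi1]
        by_cases hi0 : i = i0
        · rw [if_pos hi0, hi0]; simpa using hu0t
        · rw [if_neg hi0]; simpa using h1
    -- the objective strictly increases
    have hFlt : F x < F y := by
      have key : B i0 * (a * t / (u i0 - a * t)) < B i1 * (b * t / (u i1 + b * t)) := by
        have hpos1 : (0:ℝ) < u i1 + b * t := by have := mul_pos hb ht0; linarith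
        rw [mul_div_assoc', mul_div_assoc', div_lt_div_iff₀ hu0t hpos1]
        nlinarith [mul_lt_mul_of_pos_left ht3' ht0]
      have l1 : Real.log (u i0) - Real.log (u i0 - a * t) ≤ a * t / (u i0 - a * t) := by
        have h := Real.log_le_sub_one_of_pos (div_pos hu0 hu0t)
        rw [Real.log_div (ne_of_gt hu0) (ne_of_gt hu0t)] at h
        have e : u i0 / (u i0 - a * t) - 1 = a * t / (u i0 - a * t) := by
          field_simp; ring
        linarith
      have l2 : b * t / (u i1 + b * t) ≤ Real.log (u i1 + b * t) - Real.log (u i1) := by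
        have hpos : (0:ℝ) < u i1 + b * t := by have := mul_pos hb ht0; linarith
        have h := Real.log_le_sub_one_of_pos (div_pos hu1 hpos)
        rw [Real.log_div (ne_of_gt hu1) (ne_of_gt hpos)] at h
        have e : u i1 / (u i1 + b * t) - 1 = -(b * t / (u i1 + b * t)) := by
          field_simp; ring
        linarith
      have hgain : F y - F x =
          B i0 * (Real.log (u i0 - a * t) - Real.log (u i0))
          + B i1 * (Real.log (u i1 + b * t) - Real.log (u i1)) := by
        simp only [hFdef]
        rw [← Finset.sum_sub_distrib]
        rw [Finset.sum_eq_add_of_mem i0 i1 (Finset.mem_univ _) (Finset.mem_univ _)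
          (fun h => hii h.symm) ?_]
        · rw [hyu i0, hyu i1, hu i0, hu i1]
          rw [if_neg (fun h => hii h.symm), if_pos rfl, if_pos rfl,
            if_neg hii]
          ring_nf
        · intro i _ hi
          rw [hyu i, hu i, if_neg hi.2, if_neg hi.1]
          ring_nf
      have h1 : B i0 * (Real.log (u i0) - Real.log (u i0 - a * t))
          ≤ B i0 * (a * t / (u i0 - a * t)) :=
        mul_le_mul_of_nonneg_left l1 hB0.le
      have h2 : B i1 * (b * t / (u i1 + b * t))
          ≤ B i1 * (Real.log (u i1 + b * t) - Real.log (u i1)) :=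
        mul_le_mul_of_nonneg_left l2 hB1.le
      linarith
    exact absurd (hFle y hyf hyupos) (not_le.mpr hFlt)
  -- (a)
  have ha : ∀ i j, 0 < x i j → (B i / u i) * v i j = p j := by
    intro i j hxij
    have hub : (B i / u i) * v i j ≤ p j := (hp j).2 ⟨i, by simp only [hu]⟩
    obtain ⟨k, hk⟩ := (hp j).1
    simp only [hu] at hk
    exact le_antisymm hub (hk ▸ hswap i k j hxij)
  -- (b) per buyer
  have hbudget : ∀ i, ∑ j, p j * x i j = B i := by
    intro i
    have e : ∀ j, p j * x i j = (B i / u i) * (v i j * x i j) := by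
      intro j
      rcases eq_or_lt_of_le (hxnn i j) with h | h
      · rw [← h]; ring
      · rw [← ha i j h]; ring
    rw [Finset.sum_congr rfl (fun j _ => e j), ← Finset.mul_sum, hu i]
    exact div_mul_cancel₀ _ (hune i)
  -- total budget
  have htotal : ∑ j, s j * p j = ∑ i, B i := by
    calc ∑ j, s j * p j = ∑ j, ∑ i, p j * x i j := by
          refine Finset.sum_congr rfl fun j _ => ?_
          rw [← hclear j, Finset.sum_mul]
          exact Finset.sum_congr rfl fun i _ => mul_comm _ _
      _ = ∑ i, ∑ j, p j * x i j := Finset.sum_comm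
      _ = ∑ i, B i := Finset.sum_congr rfl fun i _ => hbudget i
  -- (d)
  have hdemand : ∀ i, ∀ y : Fin m → ℝ, (∀ j, 0 ≤ y j) → (∑ j, p j * y j) ≤ B i →
      (∑ j, v i j * y j) ≤ ∑ j, v i j * x i j := by
    intro i y hynn hpy
    have hβ : 0 < B i / u i := div_pos (hB i) (hupos i)
    have step : ∀ j, v i j * y j ≤ (p j * y j) / (B i / u i) := by
      intro j
      have hub : (B i / u i) * v i j ≤ p j := (hp j).2 ⟨i, by simp only [hu]⟩
      rw [le_div_iff₀ hβ]
      have := mul_le_mul_of_nonneg_right hub (hynn j)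
      calc v i j * y j * (B i / u i) = (B i / u i) * v i j * y j := by ring
        _ ≤ p j * y j := this
    calc (∑ j, v i j * y j) ≤ ∑ j, (p j * y j) / (B i / u i) :=
          Finset.sum_le_sum fun j _ => step j
      _ = (∑ j, p j * y j) / (B i / u i) := by rw [Finset.sum_div]
      _ ≤ B i / (B i / u i) := div_le_div_of_nonneg_right hpy hβ.le
      _ = u i := by
          rw [div_div_eq_mul_div, mul_comm, mul_div_assoc, div_self (hB i).ne', mul_one]
      _ = ∑ j, v i j * x i j := (hu i).symm
  refine ⟨fun i j h => ?_, hbudget, htotal, hclear, hdemand⟩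
  rw [hu i]
  exact ha i j h
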